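/- The point [2,2,2,-3,-3] in the hyperplane x1+...+x5=0 of P^4 is a singular point of the quartic x1^4+...+x5^4 - t(x1^2+...+x5^2)^2 = 0 if and only if t = 7/30. -/

import Mathlib

/-- [2,2,2,-3,-3] is a singular point of S_t iff t = 7/30. -/
theorem stmt1 (t : ℚ) :
    (∃ c : ℚ, ∀ i : Fin 5,
      4 * (![2,2,2,-3,-3] : Fin 5 → ℚ) i ^ 3
        - 4 * t * (∑ j : Fin 5, (![2,2,2,-3,-3] : Fin 5 → ℚ) j ^ 2)
            * (![2,2,2,-3,-3] : Fin 5 → ℚ) i = c)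
    ↔ t = 7/30 := by
  constructor
  · rintro ⟨c, h⟩
    have h0 := h 0
    have h3 := h 3
    simp [Fin.sum_univ_five] at h0 h3
    linarith
  · rintro rfl
    refine ⟨-24, fun i => ?_⟩
    fin_cases i <;> simp [Fin.sum_univ_five] <;> norm_num
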